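/- Let p₁ and p₂ be probability densities on ℝ, each with finite mean, strictly positive finite variance, and finite differential entropy, and let p(ξ₁,ξ₂) := p₁(ξ₁)·p₂(ξ₂) be the product density on ℝ². Then the Gaussian density matching the mean vector and covariance matrix of p factorizes as the product of the Gaussian densities matching p₁ and p₂, and the negentropies satisfy N[p] = N[p₁] + N[p₂]. -/

import Mathlib

open MeasureTheory Real

/-- Differential entropy (in bits) of a density on ℝ. -/
noncomputable def H1 (p : ℝ → ℝ) : ℝ := -∫ x : ℝ, p x * Real.logb 2 (p x)

/-- Differential entropy (in bits) of a density on ℝ². -/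
noncomputable def H2 (p : ℝ × ℝ → ℝ) : ℝ := -∫ ξ : ℝ × ℝ, p ξ * Real.logb 2 (p ξ)

/-- The univariate Gaussian density with mean `m` and variance `v`. -/
noncomputable def gauss1 (m v x : ℝ) : ℝ :=
  (Real.sqrt (2 * Real.pi * v))⁻¹ * Real.exp (-(x - m) ^ 2 / (2 * v))

/-- The bivariate Gaussian density with mean `(m₁, m₂)` and covariance matrix
`[[v₁, c], [c, v₂]]`. -/
noncomputable def gauss2 (m₁ m₂ v₁ v₂ c x y : ℝ) : ℝ :=
  (2 * Real.pi * Real.sqrt (v₁ * v₂ - c ^ 2))⁻¹ *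
    Real.exp (-(v₂ * (x - m₁) ^ 2 - 2 * c * (x - m₁) * (y - m₂) + v₁ * (y - m₂) ^ 2) /
      (2 * (v₁ * v₂ - c ^ 2)))

lemma gauss1_eq_pdf (m v : ℝ) (hv : 0 < v) :
    gauss1 m v = ProbabilityTheory.gaussianPDFReal m ⟨v, hv.le⟩ := by
  funext x
  simp [gauss1, ProbabilityTheory.gaussianPDFReal]
  rfl

lemma gauss1_pos (m v : ℝ) (hv : 0 < v) (x : ℝ) : 0 < gauss1 m v x := by
  have hπ := Real.pi_pos
  unfold gauss1
  positivity

lemma gauss1_integrable (m v : ℝ) (hv : 0 < v) : Integrable (gauss1 m v) := by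
  rw [gauss1_eq_pdf m v hv]
  exact ProbabilityTheory.integrable_gaussianPDFReal m ⟨v, hv.le⟩

lemma gauss1_norm (m v : ℝ) (hv : 0 < v) : ∫ x : ℝ, gauss1 m v x = 1 := by
  rw [gauss1_eq_pdf m v hv]
  exact ProbabilityTheory.integral_gaussianPDFReal_eq_one m
    (by intro h; exact hv.ne' (congrArg Subtype.val h))

lemma sq_mul_gauss1_integrable (m v : ℝ) (hv : 0 < v) :
    Integrable (fun x : ℝ => (x - m) ^ 2 * gauss1 m v x) := by
  have hb : (0 : ℝ) < (2 * v)⁻¹ := by positivity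
  have h0 : Integrable (fun x : ℝ => x ^ 2 * Real.exp (-(2 * v)⁻¹ * x ^ 2)) := by
    have h := integrable_rpow_mul_exp_neg_mul_sq hb (by norm_num : (-1 : ℝ) < 2)
    refine h.congr (Filter.Eventually.of_forall fun x => ?_)
    norm_num [Real.rpow_natCast x 2]
  have h1 : Integrable (fun x : ℝ =>
      (Real.sqrt (2 * Real.pi * v))⁻¹ * ((x - m) ^ 2 * Real.exp (-(2 * v)⁻¹ * (x - m) ^ 2))) :=
    ((h0.comp_sub_right m).const_mul _)
  refine h1.congr (Filter.Eventually.of_forall fun x => ?_)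
  simp only [gauss1]
  rw [show -(x - m) ^ 2 / (2 * v) = -(2 * v)⁻¹ * (x - m) ^ 2 from by field_simp]
  ring

lemma gauss1_ent_integrable (m v : ℝ) (hv : 0 < v) :
    Integrable (fun x : ℝ => gauss1 m v x * Real.logb 2 (gauss1 m v x)) := by
  have key : (fun x : ℝ => gauss1 m v x * Real.logb 2 (gauss1 m v x)) =
      fun x : ℝ => (Real.log ((Real.sqrt (2 * Real.pi * v))⁻¹) / Real.log 2) * gauss1 m v x
        + (-(Real.log 2 * (2 * v))⁻¹) * ((x - m) ^ 2 * gauss1 m v x) := by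
    funext x
    have hπ := Real.pi_pos
    have hs : (0:ℝ) < Real.sqrt (2 * Real.pi * v) := Real.sqrt_pos.mpr (by positivity)
    have hl2 : Real.log 2 ≠ 0 := ne_of_gt (Real.log_pos (by norm_num))
    have hlog : Real.log (gauss1 m v x)
        = Real.log ((Real.sqrt (2 * Real.pi * v))⁻¹) + (-(x - m) ^ 2 / (2 * v)) := by
      rw [gauss1, Real.log_mul (by positivity) (Real.exp_ne_zero _), Real.log_exp]
    rw [Real.logb, hlog]
    field_simp
  rw [key]
  exact ((gauss1_integrable m v hv).const_mul _).add
    ((sq_mul_gauss1_integrable m v hv).const_mul _)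

/-- Entropy of a product density is the sum of entropies. -/
lemma H2_prod (q₁ q₂ : ℝ → ℝ)
    (h₁nn : ∀ x, 0 ≤ q₁ x) (h₁int : Integrable q₁) (h₁norm : ∫ x : ℝ, q₁ x = 1)
    (h₁ent : Integrable (fun x : ℝ => q₁ x * Real.logb 2 (q₁ x)))
    (h₂nn : ∀ x, 0 ≤ q₂ x) (h₂int : Integrable q₂) (h₂norm : ∫ x : ℝ, q₂ x = 1)
    (h₂ent : Integrable (fun x : ℝ => q₂ x * Real.logb 2 (q₂ x))) :
    H2 (fun ξ : ℝ × ℝ => q₁ ξ.1 * q₂ ξ.2) = H1 q₁ + H1 q₂ := by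
  have key : ∀ ξ : ℝ × ℝ, (q₁ ξ.1 * q₂ ξ.2) * Real.logb 2 (q₁ ξ.1 * q₂ ξ.2)
      = (q₁ ξ.1 * Real.logb 2 (q₁ ξ.1)) * q₂ ξ.2
        + q₁ ξ.1 * (q₂ ξ.2 * Real.logb 2 (q₂ ξ.2)) := by
    intro ξ
    by_cases h1 : q₁ ξ.1 = 0
    · simp [h1]
    by_cases h2 : q₂ ξ.2 = 0
    · simp [h2]
    rw [Real.logb, Real.logb, Real.logb, Real.log_mul h1 h2]
    ring
  unfold H2 H1
  rw [Measure.volume_eq_prod]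
  rw [integral_congr_ae (Filter.Eventually.of_forall key)]
  rw [integral_add (h₁ent.mul_prod h₂int) (h₁int.mul_prod h₂ent),
    integral_prod_mul (fun x => q₁ x * Real.logb 2 (q₁ x)) q₂,
    integral_prod_mul q₁ (fun y => q₂ y * Real.logb 2 (q₂ y)), h₁norm, h₂norm]
  ring

lemma gauss2_factor (m₁ m₂ v₁ v₂ : ℝ) (hv₁ : 0 < v₁) (hv₂ : 0 < v₂) (x y : ℝ) :
    gauss2 m₁ m₂ v₁ v₂ 0 x y = gauss1 m₁ v₁ x * gauss1 m₂ v₂ y := by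
  have hπ := Real.pi_pos
  unfold gauss2 gauss1
  rw [mul_mul_mul_comm, ← Real.exp_add, ← mul_inv]
  have hs : Real.sqrt (2 * Real.pi * v₁) * Real.sqrt (2 * Real.pi * v₂)
      = 2 * Real.pi * Real.sqrt (v₁ * v₂ - 0 ^ 2) := by
    rw [← Real.sqrt_mul (by positivity),
      show (2 * Real.pi * v₁) * (2 * Real.pi * v₂) = (2 * Real.pi) ^ 2 * (v₁ * v₂ - 0 ^ 2) by ring,
      Real.sqrt_mul (by positivity), Real.sqrt_sq (by positivity)]
  rw [hs]
  congr 1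
  field_simp
  ring

/-- Additivity of negentropy for product densities: if `p₁`, `p₂` are probability
densities on ℝ with finite means `m₁`, `m₂`, strictly positive finite variances
`v₁`, `v₂` and finite differential entropies, and `p(ξ₁,ξ₂) = p₁(ξ₁)p₂(ξ₂)`, then
the cross covariance of `p` vanishes, the Gaussian matching the mean vector and
covariance matrix of `p` factorizes as the product of the Gaussians matching `p₁`
and `p₂`, and the negentropies satisfy `N[p] = N[p₁] + N[p₂]`. -/
theorem negentropy_additive_of_product (p₁ p₂ : ℝ → ℝ) (m₁ m₂ v₁ v₂ : ℝ)
    (h₁nn : ∀ x, 0 ≤ p₁ x) (h₁int : Integrable p₁) (h₁norm : ∫ x : ℝ, p₁ x = 1)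
    (h₁meanInt : Integrable (fun x : ℝ => x * p₁ x)) (hm₁ : ∫ x : ℝ, x * p₁ x = m₁)
    (h₁varInt : Integrable (fun x : ℝ => (x - m₁) ^ 2 * p₁ x))
    (hv₁ : ∫ x : ℝ, (x - m₁) ^ 2 * p₁ x = v₁) (hv₁pos : 0 < v₁)
    (h₁ent : Integrable (fun x : ℝ => p₁ x * Real.logb 2 (p₁ x)))
    (h₂nn : ∀ x, 0 ≤ p₂ x) (h₂int : Integrable p₂) (h₂norm : ∫ x : ℝ, p₂ x = 1)
    (h₂meanInt : Integrable (fun x : ℝ => x * p₂ x)) (hm₂ : ∫ x : ℝ, x * p₂ x = m₂)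
    (h₂varInt : Integrable (fun x : ℝ => (x - m₂) ^ 2 * p₂ x))
    (hv₂ : ∫ x : ℝ, (x - m₂) ^ 2 * p₂ x = v₂) (hv₂pos : 0 < v₂)
    (h₂ent : Integrable (fun x : ℝ => p₂ x * Real.logb 2 (p₂ x))) :
    (∫ ξ : ℝ × ℝ, (ξ.1 - m₁) * (ξ.2 - m₂) * (p₁ ξ.1 * p₂ ξ.2)) = 0 ∧
    (∀ ξ : ℝ × ℝ, gauss2 m₁ m₂ v₁ v₂ 0 ξ.1 ξ.2 = gauss1 m₁ v₁ ξ.1 * gauss1 m₂ v₂ ξ.2) ∧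
    H2 (fun ξ : ℝ × ℝ => gauss2 m₁ m₂ v₁ v₂ 0 ξ.1 ξ.2) -
        H2 (fun ξ : ℝ × ℝ => p₁ ξ.1 * p₂ ξ.2)
      = (H1 (gauss1 m₁ v₁) - H1 p₁) + (H1 (gauss1 m₂ v₂) - H1 p₂) := by
  refine ⟨?_, fun ξ => gauss2_factor m₁ m₂ v₁ v₂ hv₁pos hv₂pos ξ.1 ξ.2, ?_⟩
  · have heq : (fun ξ : ℝ × ℝ => (ξ.1 - m₁) * (ξ.2 - m₂) * (p₁ ξ.1 * p₂ ξ.2))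
        = fun ξ : ℝ × ℝ => ((ξ.1 - m₁) * p₁ ξ.1) * ((ξ.2 - m₂) * p₂ ξ.2) := by
      funext ξ; ring
    rw [heq, Measure.volume_eq_prod,
      integral_prod_mul (fun x => (x - m₁) * p₁ x) (fun y => (y - m₂) * p₂ y)]
    have h1 : ∫ x : ℝ, (x - m₁) * p₁ x = 0 := by
      have : (fun x : ℝ => (x - m₁) * p₁ x) = fun x : ℝ => x * p₁ x - m₁ * p₁ x := by
        funext x; ring
      rw [this, integral_sub h₁meanInt (h₁int.const_mul m₁), hm₁, integral_const_mul, h₁norm]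
      ring
    rw [h1, zero_mul]
  · have hG : H2 (fun ξ : ℝ × ℝ => gauss2 m₁ m₂ v₁ v₂ 0 ξ.1 ξ.2)
        = H1 (gauss1 m₁ v₁) + H1 (gauss1 m₂ v₂) := by
      have : (fun ξ : ℝ × ℝ => gauss2 m₁ m₂ v₁ v₂ 0 ξ.1 ξ.2)
          = fun ξ : ℝ × ℝ => gauss1 m₁ v₁ ξ.1 * gauss1 m₂ v₂ ξ.2 := by
        funext ξ; exact gauss2_factor m₁ m₂ v₁ v₂ hv₁pos hv₂pos ξ.1 ξ.2
      rw [this]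
      exact H2_prod _ _ (fun x => (gauss1_pos m₁ v₁ hv₁pos x).le)
        (gauss1_integrable m₁ v₁ hv₁pos) (gauss1_norm m₁ v₁ hv₁pos)
        (gauss1_ent_integrable m₁ v₁ hv₁pos)
        (fun x => (gauss1_pos m₂ v₂ hv₂pos x).le)
        (gauss1_integrable m₂ v₂ hv₂pos) (gauss1_norm m₂ v₂ hv₂pos)
        (gauss1_ent_integrable m₂ v₂ hv₂pos)
    have hP : H2 (fun ξ : ℝ × ℝ => p₁ ξ.1 * p₂ ξ.2) = H1 p₁ + H1 p₂ :=
      H2_prod _ _ h₁nn h₁int h₁norm h₁ent h₂nn h₂int h₂norm h₂ent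
    rw [hG, hP]
    ring
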